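/- Let X be a real Hilbert space, K ⊆ X nonempty closed convex, A : X → X strongly monotone with constant m_A and Lipschitz, Y a Hilbert space, and j : Y × K → ℝ with j(η,·) convex l.s.c. for each η, satisfying j(η₁,v₂) - j(η₁,v₁) + j(η₂,v₁) - j(η₂,v₂) ≤ α_j ∥η₁ - η₂∥_Y ∥v₁ - v₂∥_X for all η₁,η₂ ∈ Y, v₁,v₂ ∈ K. For i = 1, 2 let uᵢ ∈ K satisfy j(ηᵢ,v) - j(ηᵢ,uᵢ) ≥ ⟨fᵢ - Auᵢ - ξᵢ, v - uᵢ⟩ for all v ∈ K, with ηᵢ ∈ Y, ξᵢ, fᵢ ∈ X. Then m_A ∥u₁ - u₂∥_X ≤ α_j ∥η₁ - η₂∥_Y + ∥ξ₁ - ξ₂∥_X + ∥f₁ - f₂∥_X. -/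

import Mathlib

open RealInnerProductSpace

/-- The a priori estimate for solutions of two parametrized elliptic variational
inequalities: `m_A ∥u₁ - u₂∥ ≤ α_j ∥η₁ - η₂∥ + ∥ξ₁ - ξ₂∥ + ∥f₁ - f₂∥`. -/
theorem estimate_of_solutions
    {X Y : Type*} [NormedAddCommGroup X] [InnerProductSpace ℝ X] [CompleteSpace X]
    [NormedAddCommGroup Y] [InnerProductSpace ℝ Y] [CompleteSpace Y]
    (K : Set X) (hKne : K.Nonempty) (hKcl : IsClosed K) (hKcv : Convex ℝ K)
    (A : X → X) (mA : ℝ) (hmA : 0 < mA)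
    (hAmono : ∀ u v : X, mA * ‖u - v‖ ^ 2 ≤ ⟪A u - A v, u - v⟫)
    (hAlip : ∃ LA : ℝ, 0 < LA ∧ ∀ u v : X, ‖A u - A v‖ ≤ LA * ‖u - v‖)
    (j : Y → X → ℝ) (hjconv : ∀ η : Y, ConvexOn ℝ K (j η))
    (hjlsc : ∀ η : Y, LowerSemicontinuousOn (j η) K)
    (αj : ℝ) (hαj : 0 ≤ αj)
    (hjb : ∀ η₁ η₂ : Y, ∀ v₁ ∈ K, ∀ v₂ ∈ K,
      j η₁ v₂ - j η₁ v₁ + j η₂ v₁ - j η₂ v₂ ≤ αj * ‖η₁ - η₂‖ * ‖v₁ - v₂‖)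
    (u₁ u₂ : X) (η₁ η₂ : Y) (ξ₁ ξ₂ f₁ f₂ : X)
    (hu₁ : u₁ ∈ K ∧ ∀ v ∈ K, j η₁ v - j η₁ u₁ ≥ ⟪f₁ - A u₁ - ξ₁, v - u₁⟫)
    (hu₂ : u₂ ∈ K ∧ ∀ v ∈ K, j η₂ v - j η₂ u₂ ≥ ⟪f₂ - A u₂ - ξ₂, v - u₂⟫) :
    mA * ‖u₁ - u₂‖ ≤ αj * ‖η₁ - η₂‖ + ‖ξ₁ - ξ₂‖ + ‖f₁ - f₂‖ := by
  obtain ⟨hu1K, h1⟩ := hu₁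
  obtain ⟨hu2K, h2⟩ := hu₂
  have H1 := h1 u₂ hu2K
  have H2 := h2 u₁ hu1K
  have Hj := hjb η₁ η₂ u₁ hu1K u₂ hu2K
  have hmono := hAmono u₁ u₂
  have e1 : ⟪f₁ - A u₁ - ξ₁, u₂ - u₁⟫ = -⟪f₁ - A u₁ - ξ₁, u₁ - u₂⟫ := by
    rw [← inner_neg_right, neg_sub]
  have e2 : (⟪f₂ - A u₂ - ξ₂, u₁ - u₂⟫ : ℝ) - ⟪f₁ - A u₁ - ξ₁, u₁ - u₂⟫
      = ⟪A u₁ - A u₂, u₁ - u₂⟫ - ⟪f₁ - f₂, u₁ - u₂⟫ - ⟪ξ₂ - ξ₁, u₁ - u₂⟫ := by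
    rw [← inner_sub_left, ← inner_sub_left, ← inner_sub_left]
    congr 1
    abel
  have cs1 : (⟪f₁ - f₂, u₁ - u₂⟫ : ℝ) ≤ ‖f₁ - f₂‖ * ‖u₁ - u₂‖ := real_inner_le_norm _ _
  have cs2 : (⟪ξ₂ - ξ₁, u₁ - u₂⟫ : ℝ) ≤ ‖ξ₁ - ξ₂‖ * ‖u₁ - u₂‖ := by
    have := real_inner_le_norm (ξ₂ - ξ₁) (u₁ - u₂)
    rwa [norm_sub_rev] at this
  have key : mA * ‖u₁ - u₂‖ ^ 2 ≤
      (αj * ‖η₁ - η₂‖ + ‖ξ₁ - ξ₂‖ + ‖f₁ - f₂‖) * ‖u₁ - u₂‖ := by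
    nlinarith [hmono, H1, H2, Hj, e1, e2, cs1, cs2]
  rcases eq_or_lt_of_le (norm_nonneg (u₁ - u₂)) with h0 | h0
  · rw [← h0, mul_zero]
    positivity
  · have := (mul_le_mul_iff_of_pos_right h0).mp (by nlinarith [key] :
      (mA * ‖u₁ - u₂‖) * ‖u₁ - u₂‖ ≤ (αj * ‖η₁ - η₂‖ + ‖ξ₁ - ξ₂‖ + ‖f₁ - f₂‖) * ‖u₁ - u₂‖)
    exact this
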